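/- Let X be a topological space and Φ a global semiflow on X. Suppose K ⊆ X satisfies Φ(t,·)''K = K for every t ≥ 0. Then for every x ∈ K there exists a map γ : ℝ → X with γ(ℝ) ⊆ K, γ(0) = x, and γ(t) = Φ(t − s, γ(s)) for all real numbers s ≤ t; that is, through every point of K there passes a full solution of Φ lying entirely in K. -/

import Mathlib

open scoped NNReal

/-- if `K` satisfies `Φ(t, ·) '' K = K` for all `t ≥ 0` under a global semiflow
`Φ`, then through every point of `K` there passes a full solution of `Φ` lying in `K`. -/
theorem exists_full_solution_through_invariant_point {X : Type*} [TopologicalSpace X]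
    (Φ : ℝ≥0 × X → X) (hcont : Continuous Φ)
    (h0 : ∀ x : X, Φ (0, x) = x)
    (hadd : ∀ (t s : ℝ≥0) (x : X), Φ (t + s, x) = Φ (t, Φ (s, x)))
    (K : Set X) (hK : ∀ t : ℝ≥0, (fun x => Φ (t, x)) '' K = K) :
    ∀ x ∈ K, ∃ γ : ℝ → X, (∀ t : ℝ, γ t ∈ K) ∧ γ 0 = x ∧
      ∀ s t : ℝ, ∀ hst : s ≤ t, γ t = Φ (⟨t - s, sub_nonneg.2 hst⟩, γ s) := by
  intro x hx
  -- forward invariance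
  have hfwd : ∀ (u : ℝ≥0) (y : X), y ∈ K → Φ (u, y) ∈ K := by
    intro u y hy
    rw [← hK u]
    exact ⟨y, hy, rfl⟩
  -- backward preimages
  have hpre : ∀ y ∈ K, ∃ z ∈ K, Φ (1, z) = y := by
    intro y hy
    rw [← hK 1] at hy
    obtain ⟨z, hz, hzy⟩ := hy
    exact ⟨z, hz, hzy⟩
  choose pre hpreK hpreEq using fun (p : {y : X // y ∈ K}) => hpre p.1 p.2
  -- backward orbit
  let seq : ℕ → {y : X // y ∈ K} := fun n => Nat.rec ⟨x, hx⟩ (fun _ p => ⟨pre p, hpreK p⟩) n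
  let g : ℕ → X := fun n => (seq n).1
  have hgK : ∀ n, g n ∈ K := fun n => (seq n).2
  have hg0 : g 0 = x := rfl
  have hgstep : ∀ n, Φ (1, g (n + 1)) = g n := fun n => hpreEq (seq n)
  -- iterated step
  have hiter : ∀ k n : ℕ, Φ ((k : ℝ≥0), g (n + k)) = g n := by
    intro k
    induction k with
    | zero => intro n; simpa using h0 (g n)
    | succ k ih =>
      intro n
      have hc : ((k + 1 : ℕ) : ℝ≥0) = (k : ℝ≥0) + 1 := by push_cast; ring
      rw [hc, hadd]
      show Φ ((k : ℝ≥0), Φ (1, g (n + k + 1))) = g n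
      rw [hgstep (n + k), ih n]
  -- consistency
  have hcons : ∀ (t : ℝ) (n m : ℕ) (hn : 0 ≤ t + n) (hm : 0 ≤ t + m), n ≤ m →
      Φ (⟨t + m, hm⟩, g m) = Φ (⟨t + n, hn⟩, g n) := by
    intro t n m hn hm hnm
    obtain ⟨k, rfl⟩ := Nat.exists_eq_add_of_le hnm
    have he : (⟨t + ↑(n + k), hm⟩ : ℝ≥0) = ((⟨t + ↑n, hn⟩ + ((k : ℕ) : ℝ≥0) : ℝ≥0)) := by
      refine Subtype.ext ?_
      show t + ((n + k : ℕ) : ℝ) = (t + (n : ℝ)) + ((k : ℕ) : ℝ≥0).toReal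
      rw [NNReal.coe_natCast]
      push_cast
      ring
    rw [he]; exact (hadd _ _ _).trans (congrArg (fun y => Φ (_, y)) (hiter k n))
  -- define γ
  have hnn : ∀ t : ℝ, 0 ≤ t + (⌈-t⌉₊ : ℝ) := by
    intro t
    have := Nat.le_ceil (-t)
    linarith
  set γ : ℝ → X := fun t => Φ (⟨t + ⌈-t⌉₊, hnn t⟩, g ⌈-t⌉₊) with hγ
  refine ⟨γ, fun t => hfwd _ _ (hgK _), ?_, ?_⟩
  · show Φ (⟨0 + (⌈-(0:ℝ)⌉₊ : ℝ), hnn 0⟩, g ⌈-(0:ℝ)⌉₊) = x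
    have h1 : ⌈-(0:ℝ)⌉₊ = 0 := by simp
    have h2 : (⟨0 + (⌈-(0:ℝ)⌉₊ : ℝ), hnn 0⟩ : ℝ≥0) = 0 := by
      ext; simp
    rw [h2, h1, hg0]; exact h0 x
  · intro s t hst
    set n : ℕ := max ⌈-s⌉₊ ⌈-t⌉₊ with hn
    have hsn : 0 ≤ s + (n : ℝ) := le_trans (hnn s) (by
      have : (⌈-s⌉₊ : ℝ) ≤ n := Nat.cast_le.2 (le_max_left _ _)
      linarith)
    have htn : 0 ≤ t + (n : ℝ) := le_trans (hnn t) (by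
      have : (⌈-t⌉₊ : ℝ) ≤ n := Nat.cast_le.2 (le_max_right _ _)
      linarith)
    have hγt : γ t = Φ (⟨t + n, htn⟩, g n) :=
      (hcons t ⌈-t⌉₊ n (hnn t) htn (le_max_right _ _)).symm
    have hγs : γ s = Φ (⟨s + n, hsn⟩, g n) :=
      (hcons s ⌈-s⌉₊ n (hnn s) hsn (le_max_left _ _)).symm
    have he : (⟨t - s, sub_nonneg.2 hst⟩ : ℝ≥0) + (⟨s + n, hsn⟩ : ℝ≥0) = ⟨t + n, htn⟩ := by
      ext; push_cast; ring
    rw [hγt, hγs]; exact (congrArg (fun u => Φ (u, g n)) he).symm.trans (hadd _ _ _)
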